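/- Let g be a nonzero finite-dimensional real Lie algebra and suppose there exists α ∈ g* such that dσ = σ ∧ α for all σ ∈ g* (equivalently, g has a basis e₀,e₁,…,e_{m-1} with [e₀,e_i] = e_i for i ≥ 1 and all other brackets zero). Then every almost-complex structure J on g (J² = -1) is integrable. -/
import Mathlib


/-- If a nonzero finite-dimensional real Lie algebra `g` has
`α ∈ g*` with `dσ = σ ∧ α` for every `σ ∈ g*` (where `dσ(X,Y) = -σ⁅X,Y⁆`),
then every almost-complex structure on `g` is integrable. -/
theorem stmt14 {g : Type*} [LieRing g] [LieAlgebra ℝ g] [Nontrivial g]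
    [FiniteDimensional ℝ g]
    (α : Module.Dual ℝ g)
    (hα : ∀ σ : Module.Dual ℝ g, ∀ X Y : g,
      -σ ⁅X, Y⁆ = σ X * α Y - σ Y * α X)
    (J : g →ₗ[ℝ] g) (hJ2 : ∀ X : g, J (J X) = -X) :
    ∀ X Y : g, ⁅J X, J Y⁆ = ⁅X, Y⁆ + J ⁅J X, Y⁆ + J ⁅X, J Y⁆ := by
  have hb : ∀ X Y : g, ⁅X, Y⁆ = α X • Y - α Y • X := by
    intro X Y
    have h : ∀ σ : Module.Dual ℝ g, σ (⁅X, Y⁆ - (α X • Y - α Y • X)) = 0 := by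
      intro σ
      have h1 := hα σ X Y
      simp only [map_sub, map_smul, smul_eq_mul]
      nlinarith [h1]
    exact sub_eq_zero.mp
      ((Module.forall_dual_apply_eq_zero_iff ℝ
        (⁅X, Y⁆ - (α X • Y - α Y • X))).mp h)
  intro X Y
  rw [hb, hb, hb, hb]
  simp only [map_sub, map_smul, hJ2]
  module
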